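/- Let (R,m) be a one-dimensional Noetherian local ring, Q a parameter ideal, and K an m-primary ideal. Then g_1(Q) = -ℓ(R/K) - ℓ(H_m^0(K)), where H_m^0(K) is the zeroth local cohomology of K with support in m. -/

import Mathlib

open IsLocalRing

/-- The length of an `R`-module `M`, realized as the Krull dimension of its
lattice of submodules. -/
noncomputable def mLen (R M : Type*) [CommRing R] [AddCommGroup M] [Module R M] :
    WithBot ℕ∞ :=
  Order.krullDim (Submodule R M)

/-- `Q` is a parameter ideal of the `d`-dimensional Noetherian local ring `R`:
it is generated by `d` elements and is `m`-primary. -/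
def IsParameterIdeal (R : Type*) [CommRing R] [IsLocalRing R] (d : ℕ) (Q : Ideal R) : Prop :=
  (∃ x : Fin d → R, Q = Ideal.span (Set.range x)) ∧ Q.radical = maximalIdeal R

/-- There is a regular sequence of length `e` contained in the maximal ideal. -/
def HasRegSeq (R : Type*) [CommRing R] [IsLocalRing R] (e : ℕ) : Prop :=
  ∃ rs : List R, rs.length = e ∧ (∀ r ∈ rs, r ∈ maximalIdeal R) ∧
    RingTheory.Sequence.IsRegular R rs

/-- A Noetherian local ring of dimension `d` is Cohen-Macaulay iff its depth is `d`,
i.e. iff there is a regular sequence of length `d` in the maximal ideal. -/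
def IsCMLocal (R : Type*) [CommRing R] [IsLocalRing R] (d : ℕ) : Prop :=
  HasRegSeq R d

/-- The depth of the local ring `R` equals `e`. -/
def DepthEq (R : Type*) [CommRing R] [IsLocalRing R] (e : ℕ) : Prop :=
  HasRegSeq R e ∧ ¬ HasRegSeq R (e + 1)

/-- `R` is unmixed: every associated prime of the `m`-adic completion `R̂`
has `dim R̂/p = dim R̂`. -/
def IsUnmixed (R : Type*) [CommRing R] [IsLocalRing R] : Prop :=
  ∀ p ∈ associatedPrimes (AdicCompletion (maximalIdeal R) R)
      (AdicCompletion (maximalIdeal R) R),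
    ringKrullDim ((AdicCompletion (maximalIdeal R) R) ⧸ p) =
      ringKrullDim (AdicCompletion (maximalIdeal R) R)

/-- The alternating binomial expansion `Σ_{i=0}^d (-1)^i g_i C(n+d-i-1, d-i)`. -/
def hilbSum (d : ℕ) (g : ℕ → ℤ) (n : ℕ) : ℤ :=
  ∑ i ∈ Finset.range (d + 1), (-1 : ℤ) ^ i * g i * ((n + d - i - 1).choose (d - i) : ℤ)

/-- The alternating binomial expansion `Σ_{i=0}^{d-1} (-1)^i f_i C(n+d-i-1, d-1-i)`. -/
def fiberSum (d : ℕ) (f : ℕ → ℤ) (n : ℕ) : ℤ :=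
  ∑ i ∈ Finset.range d, (-1 : ℤ) ^ i * f i * ((n + d - i - 1).choose (d - 1 - i) : ℤ)

/-- The length `ℓ(Qⁿ/KQⁿ)` of the `n`-th component of the fiber cone `F_K(Q)`. -/
noncomputable def fibLen (R : Type*) [CommRing R] (Q K : Ideal R) (n : ℕ) : WithBot ℕ∞ :=
  mLen R (↥(Q ^ n) ⧸ (Submodule.comap (Submodule.subtype (Q ^ n : Submodule R R))
    (K * Q ^ n : Ideal R)))

/-- `x ∈ Q`, and the degree-one initial form `x*` of `x` in the associated graded ring
`G(Q)` is nonzero and superficial: `(Qⁿ : x) ∩ Q^c = Q^{n-1}` for all `n > c`. -/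
def IsGSuperficial {R : Type*} [CommRing R] (Q : Ideal R) (x : R) : Prop :=
  x ∈ Q ∧ x ∉ Q ^ 2 ∧
    ∃ c > 0, ∀ n > c, Submodule.colon (Q ^ n) (Ideal.span {x}) ⊓ Q ^ c = Q ^ (n - 1)

/-- `x ∈ Q`, and the degree-one initial form `x°` of `x` in the fiber cone `F_K(Q)` is
nonzero and superficial: `(0 : x°) ∩ F_K(Q)_n = 0` for all `n > c`, i.e.
`(KQ^{n+1} : x) ∩ Qⁿ ⊆ KQⁿ` for all `n > c`. -/
def IsFSuperficial {R : Type*} [CommRing R] (Q K : Ideal R) (x : R) : Prop :=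
  x ∈ Q ∧ x ∉ K * Q ∧
    ∃ c > 0, ∀ n > c,
      Submodule.colon (K * Q ^ (n + 1)) (Ideal.span {x}) ⊓ Q ^ n ≤ K * Q ^ n

section LatticeLen

variable {α β γ : Type*} [Preorder α] [Preorder β] [Preorder γ]

private lemma aux_height_add_one_le {a b : α} (h : a < b) :
    Order.height a + 1 ≤ Order.height b := by
  rw [Order.height_eq_iSup_lt_height b]
  exact le_iSup₂_of_le a h le_rfl

private lemma aux_length_le_height_add (f : α → β) (g : α → γ)
    (hf : Monotone f) (hg : Monotone g)
    (h : ∀ x y : α, x < y → f x < f y ∨ g x < g y) (p : LTSeries α) :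
    (p.length : ℕ∞) ≤ Order.height (f p.last) + Order.height (g p.last) := by
  suffices H : ∀ n (p : LTSeries α), p.length = n →
      (n : ℕ∞) ≤ Order.height (f p.last) + Order.height (g p.last) from H _ p rfl
  intro n
  induction n with
  | zero => intro p _; simp
  | succ n ih =>
    intro p hp
    have hne : p.length ≠ 0 := by omega
    have hlt : p.eraseLast.last < p.last := p.eraseLast_last_rel_last hne
    have h1 := ih p.eraseLast (by simp [hp])
    rcases h _ _ hlt with hc | hc
    · calc ((n+1 : ℕ) : ℕ∞) ≤ (Order.height (f p.eraseLast.last) + 1)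
            + Order.height (g p.eraseLast.last) := by
            push_cast
            calc (n : ℕ∞) + 1 ≤ (Order.height (f p.eraseLast.last) +
                Order.height (g p.eraseLast.last)) + 1 := by gcongr
              _ = _ := by ring
        _ ≤ Order.height (f p.last) + Order.height (g p.last) := by
            gcongr
            · exact aux_height_add_one_le hc
            · exact hg hlt.le
    · calc ((n+1 : ℕ) : ℕ∞) ≤ Order.height (f p.eraseLast.last)
            + (Order.height (g p.eraseLast.last) + 1) := by
            push_cast
            calc (n : ℕ∞) + 1 ≤ (Order.height (f p.eraseLast.last) +
                Order.height (g p.eraseLast.last)) + 1 := by gcongr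
              _ = _ := by ring
        _ ≤ Order.height (f p.last) + Order.height (g p.last) := by
            gcongr
            · exact hf hlt.le
            · exact aux_height_add_one_le hc

private lemma aux_krullDim_le_add (f : α → β) (g : α → γ)
    (hf : Monotone f) (hg : Monotone g)
    (h : ∀ x y : α, x < y → f x < f y ∨ g x < g y) :
    Order.krullDim α ≤ Order.krullDim β + Order.krullDim γ := by
  rw [Order.krullDim]
  apply iSup_le
  intro p
  calc ((p.length : ℕ∞) : WithBot ℕ∞) ≤
      ((Order.height (f p.last) + Order.height (g p.last) : ℕ∞) : WithBot ℕ∞) := by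
        exact_mod_cast aux_length_le_height_add f g hf hg h p
    _ = (Order.height (f p.last) : WithBot ℕ∞) + (Order.height (g p.last) : WithBot ℕ∞) := by
        push_cast; rfl
    _ ≤ Order.krullDim β + Order.krullDim γ := by
        gcongr <;> [exact Order.height_le_krullDim _; exact Order.height_le_krullDim _]

end LatticeLen

section MLenLemmas

variable {R M N' : Type*} [CommRing R] [AddCommGroup M] [Module R M]
  [AddCommGroup N'] [Module R N']

lemma mLen_ne_bot : mLen R M ≠ ⊥ := by
  have h : (0 : WithBot ℕ∞) ≤ mLen R M := Order.krullDim_nonneg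
  intro hb
  rw [hb] at h
  exact absurd h (by simp)

lemma mLen_nonneg : (0 : WithBot ℕ∞) ≤ mLen R M := Order.krullDim_nonneg

lemma mLen_congr (e : M ≃ₗ[R] N') : mLen R M = mLen R N' :=
  Order.krullDim_eq_of_orderIso (Submodule.orderIsoMapComap e)

lemma mLen_add (N : Submodule R M) : mLen R M = mLen R N + mLen R (M ⧸ N) := by
  apply le_antisymm
  · apply aux_krullDim_le_add (fun P => P.comap N.subtype) (fun P => P.map N.mkQ)
      (fun _ _ h => Submodule.comap_mono h) (fun _ _ h => Submodule.map_mono h)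
    intro x y hxy
    by_cases h : x.comap N.subtype < y.comap N.subtype
    · exact Or.inl h
    have e1 : x.comap N.subtype = y.comap N.subtype :=
      ((Submodule.comap_mono hxy.le).lt_or_eq).resolve_left h
    refine Or.inr (lt_of_le_of_ne (Submodule.map_mono hxy.le) fun e2 => hxy.ne ?_)
    apply le_antisymm hxy.le
    intro a ha
    have : N.mkQ a ∈ x.map N.mkQ := by rw [e2]; exact Submodule.mem_map_of_mem ha
    obtain ⟨b, hbx, hba⟩ := this
    have hab : a - b ∈ N := by
      have h0 : N.mkQ (a - b) = 0 := by rw [map_sub, hba, sub_self]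
      rwa [← Submodule.Quotient.mk_eq_zero, ← Submodule.mkQ_apply]
    have haby : a - b ∈ y := y.sub_mem ha (hxy.le hbx)
    have : (⟨a - b, hab⟩ : N) ∈ y.comap N.subtype := haby
    rw [← e1] at this
    have habx : a - b ∈ x := this
    simpa using x.add_mem habx hbx
  · rw [mLen, mLen, mLen, Order.krullDim_eq_iSup_length (α := Submodule R N),
      Order.krullDim_eq_iSup_length (α := Submodule R (M ⧸ N)),
      Order.krullDim_eq_iSup_length (α := Submodule R M)]
    rw [← WithBot.coe_add, WithBot.coe_le_coe]
    apply ENat.iSup_add_iSup_le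
    intro p q
    let p' : LTSeries (Submodule R M) := p.map (Submodule.map N.subtype)
      (Submodule.map_strictMono_of_injective N.injective_subtype)
    let q' : LTSeries (Submodule R M) := q.map (Submodule.comap N.mkQ)
      (Submodule.comap_strictMono_of_surjective N.mkQ_surjective)
    have hle : p'.last ≤ q'.head := by
      show Submodule.map N.subtype p.last ≤ Submodule.comap N.mkQ q.head
      calc Submodule.map N.subtype p.last ≤ N :=
            le_trans (Submodule.map_mono le_top) (le_of_eq (Submodule.map_subtype_top N))
        _ ≤ Submodule.comap N.mkQ q.head :=
            le_trans (le_of_eq (N.ker_mkQ).symm) (Submodule.comap_mono bot_le)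
    rcases hle.lt_or_eq with hlt | heq
    · calc (p.length + q.length : ℕ∞) ≤ (((p'.append q' hlt).length : ℕ) : ℕ∞) := by
            show _ ≤ ((p.length + q.length + 1 : ℕ) : ℕ∞)
            push_cast
            exact le_self_add
        _ ≤ ⨆ (s : LTSeries (Submodule R M)), (s.length : ℕ∞) :=
            le_iSup (fun (s : LTSeries (Submodule R M)) => (s.length : ℕ∞)) _
    · calc (p.length + q.length : ℕ∞) = (((p'.smash q' heq).length : ℕ) : ℕ∞) := by
            show _ = ((p.length + q.length : ℕ) : ℕ∞)
            push_cast
            rfl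
        _ ≤ ⨆ (s : LTSeries (Submodule R M)), (s.length : ℕ∞) :=
            le_iSup (fun (s : LTSeries (Submodule R M)) => (s.length : ℕ∞)) _

end MLenLemmas

section IdealLen

variable {R : Type} [CommRing R]

/-- ℓ(R/I) = ℓ(W·(R/I)) + ℓ(R/(I ⊔ W)). -/
lemma mLen_quot_decomp (I W : Ideal R) :
    mLen R (R ⧸ I) = mLen R ↥(Submodule.map I.mkQ W) + mLen R (R ⧸ (I ⊔ W)) := by
  have h1 := mLen_add (Submodule.map I.mkQ (I ⊔ W) : Submodule R (R ⧸ I))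
  have h2 : Submodule.map I.mkQ (I ⊔ W) = Submodule.map I.mkQ W := by
    rw [Submodule.map_sup]
    have : Submodule.map I.mkQ I = ⊥ := by
      exact Submodule.mkQ_map_self I
    rw [this, bot_sup_eq]
  have h3 := mLen_congr (R := R)
    (Submodule.quotientQuotientEquivQuotient I (I ⊔ W) le_sup_left)
  rw [h2] at h1 h3
  rw [h1, h3]

/-- ℓ(W·(R/I)) = ℓ(W / (I ∩ W)). -/
lemma mLen_map_mkQ (I W : Ideal R) :
    mLen R ↥(Submodule.map I.mkQ W) = mLen R (↥W ⧸ Submodule.comap W.subtype I) := by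
  have hr : LinearMap.range (I.mkQ ∘ₗ W.subtype) = Submodule.map I.mkQ W := by
    rw [LinearMap.range_comp, Submodule.range_subtype]
  have hk : LinearMap.ker (I.mkQ ∘ₗ W.subtype) = Submodule.comap W.subtype I := by
    rw [LinearMap.ker_comp, Submodule.ker_mkQ]
  calc mLen R ↥(Submodule.map I.mkQ W)
      = mLen R ↥(LinearMap.range (I.mkQ ∘ₗ W.subtype)) := by rw [hr]
    _ = mLen R (↥W ⧸ LinearMap.ker (I.mkQ ∘ₗ W.subtype)) :=
        (mLen_congr (LinearMap.quotKerEquivRange (I.mkQ ∘ₗ W.subtype))).symm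
    _ = mLen R (↥W ⧸ Submodule.comap W.subtype I) := by rw [hk]

lemma mLen_map_mkQ_of_disjoint (I W : Ideal R) (h : I ⊓ W = ⊥) :
    mLen R ↥(Submodule.map I.mkQ W) = mLen R ↥W := by
  rw [mLen_map_mkQ]
  have hc : Submodule.comap W.subtype I = ⊥ := by
    rw [eq_bot_iff]
    rintro ⟨a, haW⟩ haI
    have : a ∈ I ⊓ W := ⟨haI, haW⟩
    rw [h] at this
    simpa [Submodule.mem_bot] using this
  exact mLen_congr (Submodule.quotEquivOfEqBot _ hc)

/-- The key multiplication step. -/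
lemma mLen_quot_mul_step (x : R) (A B : Ideal R)
    (hAB : ∀ a ∈ A, x * a ∈ B) (hinj : ∀ z : R, x * z ∈ B → z ∈ A) :
    mLen R (R ⧸ B) = mLen R (R ⧸ A) + mLen R (R ⧸ (B ⊔ Ideal.span {x})) := by
  have hle : A ≤ Submodule.comap (x • (LinearMap.id : R →ₗ[R] R)) B := by
    intro a ha
    simpa [smul_eq_mul] using hAB a ha
  set φ : (R ⧸ A) →ₗ[R] R ⧸ B := Submodule.mapQ A B _ hle with hφ
  have hφ_apply : ∀ z : R, φ (Submodule.Quotient.mk z) = Submodule.Quotient.mk (x * z) := by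
    intro z
    rw [hφ, Submodule.mapQ_apply]
    simp
  have hφinj : Function.Injective φ := by
    rw [← LinearMap.ker_eq_bot, eq_bot_iff]
    intro z hz
    obtain ⟨z, rfl⟩ := Submodule.Quotient.mk_surjective A z
    rw [LinearMap.mem_ker, hφ_apply, Submodule.Quotient.mk_eq_zero] at hz
    rw [Submodule.mem_bot, Submodule.Quotient.mk_eq_zero]
    exact hinj z hz
  have hrid : LinearMap.range (x • (LinearMap.id : R →ₗ[R] R)) = Ideal.span {x} := by
    ext a
    simp only [LinearMap.mem_range, LinearMap.smul_apply, LinearMap.id_apply, smul_eq_mul,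
      Ideal.mem_span_singleton']
    exact ⟨fun ⟨y, hy⟩ => ⟨y, by rw [← hy]; ring⟩, fun ⟨y, hy⟩ => ⟨y, by rw [← hy]; ring⟩⟩
  have hrange : LinearMap.range φ = Submodule.map B.mkQ (Ideal.span {x}) := by
    have h1 : LinearMap.range (φ.comp A.mkQ) = LinearMap.range φ := by
      rw [LinearMap.range_comp, Submodule.range_mkQ, Submodule.map_top]
    rw [← h1, Submodule.mapQ_mkQ, LinearMap.range_comp, hrid]
  have hmain := mLen_add (LinearMap.range φ : Submodule R (R ⧸ B))
  have hiso1 : mLen R ↥(LinearMap.range φ) = mLen R (R ⧸ A) :=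
    (mLen_congr (LinearEquiv.ofInjective φ hφinj)).symm
  have hsup : Submodule.map B.mkQ (Ideal.span {x})
      = Submodule.map B.mkQ (B ⊔ Ideal.span {x}) := by
    rw [Submodule.map_sup, Submodule.mkQ_map_self, bot_sup_eq]
  have hiso2 : mLen R ((R ⧸ B) ⧸ LinearMap.range φ) = mLen R (R ⧸ (B ⊔ Ideal.span {x})) := by
    rw [hrange, hsup]
    exact mLen_congr (Submodule.quotientQuotientEquivQuotient B (B ⊔ Ideal.span {x}) le_sup_left)
  rw [hmain, hiso1, hiso2]

end IdealLen

section LocalPart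

open IsLocalRing

variable (R : Type) [CommRing R] [IsLocalRing R] [IsNoetherianRing R]

/-- The zeroth local cohomology of `R`, `H⁰_m(R)`. -/
noncomputable def locW : Ideal R := ⨆ t : ℕ, Submodule.colon (⊥ : Submodule R R) (((maximalIdeal R) ^ t : Ideal R) : Set R)

lemma locW_mono : Monotone (fun t : ℕ => Submodule.colon (⊥ : Ideal R) (((maximalIdeal R) ^ t : Ideal R) : Set R)) := by
  intro s t hst
  intro a ha
  rw [Submodule.mem_colon] at ha ⊢
  intro p hp
  exact ha p (Ideal.pow_le_pow_right hst hp)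

variable {R}

lemma mem_locW {a : R} : a ∈ locW R ↔ ∃ t, ∀ p ∈ (maximalIdeal R) ^ t, a * p = 0 := by
  rw [locW, Submodule.mem_iSup_of_directed _ ((locW_mono R).directed_le)]
  constructor
  · rintro ⟨t, ht⟩
    rw [Submodule.mem_colon] at ht
    exact ⟨t, fun p hp => by simpa using ht p hp⟩
  · rintro ⟨t, ht⟩
    refine ⟨t, ?_⟩
    rw [Submodule.mem_colon]
    intro p hp
    simpa using ht p hp

lemma mem_locW' {a : R} (t : ℕ) (h : a ∈ Submodule.colon (⊥ : Ideal R) (((maximalIdeal R) ^ t : Ideal R) : Set R)) :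
    a ∈ locW R :=
  le_iSup (fun t : ℕ => Submodule.colon (⊥ : Ideal R) (((maximalIdeal R) ^ t : Ideal R) : Set R)) t h

lemma locW_killed : ∃ t, ∀ a ∈ locW R, ∀ p ∈ (maximalIdeal R) ^ t, a * p = 0 := by
  obtain ⟨n, hn⟩ := (monotone_stabilizes_iff_noetherian.mpr inferInstance)
    (⟨fun t : ℕ => Submodule.colon (⊥ : Ideal R) (((maximalIdeal R) ^ t : Ideal R) : Set R), locW_mono R⟩ : ℕ →o Ideal R)
  refine ⟨n, fun a ha p hp => ?_⟩
  have hW : locW R ≤ Submodule.colon (⊥ : Ideal R) (((maximalIdeal R) ^ n : Ideal R) : Set R) := by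
    apply iSup_le
    intro i
    rcases le_total i n with h | h
    · exact locW_mono R h
    · exact le_of_eq (hn i h).symm
  have := hW ha
  rw [Submodule.mem_colon] at this
  simpa using this p hp

lemma locW_x_cancel {x : R} {k : ℕ} (hk : (maximalIdeal R) ^ k ≤ Ideal.span {x})
    {z : R} (h : x * z ∈ locW R) : z ∈ locW R := by
  obtain ⟨s, hs⟩ := mem_locW.mp h
  apply mem_locW.mpr
  refine ⟨s + k, ?_⟩
  have key : (maximalIdeal R) ^ (s + k) ≤ Submodule.colon (⊥ : Ideal R) (Ideal.span {z}) := by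
    rw [pow_add]
    apply Ideal.mul_le.mpr
    intro a haM b hbM
    have hb : b ∈ Ideal.span {x} := hk hbM
    obtain ⟨c, hc⟩ := Ideal.mem_span_singleton'.mp hb
    rw [Ideal.mem_colon_span_singleton]
    have h0 : x * z * a = 0 := hs a haM
    have : a * b * z = c * (x * z * a) := by rw [← hc]; ring
    rw [this, h0, mul_zero]
    exact Submodule.zero_mem ⊥
  intro p hp
  have hz := key hp
  rw [Ideal.mem_colon_span_singleton] at hz
  rw [mul_comm]
  simpa using hz

lemma locW_xpow_cancel {x : R} {k : ℕ} (hk : (maximalIdeal R) ^ k ≤ Ideal.span {x})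
    (n : ℕ) {z : R} (h : x ^ n * z ∈ locW R) : z ∈ locW R := by
  induction n generalizing z with
  | zero => simpa using h
  | succ n ih =>
    have : x ^ n * (x * z) ∈ locW R := by
      have : x ^ (n + 1) * z = x ^ n * (x * z) := by ring
      rwa [this] at h
    exact locW_x_cancel hk (ih this)

lemma locW_step {x : R} {k : ℕ} (hk : (maximalIdeal R) ^ k ≤ Ideal.span {x})
    (C : Ideal R) :
    mLen R (R ⧸ (locW R ⊔ Ideal.span {x} * C)) =
      mLen R (R ⧸ (locW R ⊔ C)) + mLen R (R ⧸ (locW R ⊔ Ideal.span {x})) := by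
  have hsup : (locW R ⊔ Ideal.span {x} * C) ⊔ Ideal.span {x} = locW R ⊔ Ideal.span {x} := by
    rw [sup_assoc]
    congr 1
    exact sup_eq_right.mpr Ideal.mul_le_left
  have := mLen_quot_mul_step x (locW R ⊔ C) (locW R ⊔ Ideal.span {x} * C) ?_ ?_
  · rw [this, hsup]
  · intro a ha
    obtain ⟨w, hw, c, hc, rfl⟩ := Submodule.mem_sup.mp ha
    rw [mul_add]
    exact Submodule.add_mem_sup (Ideal.mul_mem_left _ x hw)
      (Ideal.mul_mem_mul (Ideal.mem_span_singleton_self x) hc)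
  · intro z hz
    obtain ⟨w, hw, u, hu, heq⟩ := Submodule.mem_sup.mp hz
    obtain ⟨c, hc, hcu⟩ := Ideal.mem_span_singleton_mul.mp hu
    have hzc : x * (z - c) ∈ locW R := by
      have : x * (z - c) = x * z - u := by rw [← hcu]; ring
      rw [this, ← heq]
      simpa using hw
    have := locW_x_cancel hk hzc
    have hzz : z = (z - c) + c := by ring
    rw [hzz]
    exact Submodule.add_mem_sup this hc

lemma locW_pow_formula {x : R} {k : ℕ} (hk : (maximalIdeal R) ^ k ≤ Ideal.span {x})
    (C : Ideal R) (n : ℕ) :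
    mLen R (R ⧸ (locW R ⊔ Ideal.span {x} ^ n * C)) =
      mLen R (R ⧸ (locW R ⊔ C)) + n • mLen R (R ⧸ (locW R ⊔ Ideal.span {x})) := by
  induction n with
  | zero => rw [pow_zero, one_mul, zero_nsmul, add_zero]
  | succ n ih =>
    have h1 : Ideal.span {x} ^ (n + 1) * C = Ideal.span {x} * (Ideal.span {x} ^ n * C) := by
      rw [pow_succ]; ring
    rw [h1, locW_step hk, ih, succ_nsmul, add_assoc]

lemma locW_inf_pow_eq_bot (Q : Ideal R) (hQm : Q ≤ maximalIdeal R) :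
    ∃ c, ∀ n ≥ c, Q ^ n ⊓ locW R = ⊥ := by
  obtain ⟨t, ht⟩ := locW_killed (R := R)
  obtain ⟨c, hc⟩ := Ideal.exists_pow_inf_eq_pow_smul Q (locW R : Submodule R R)
  refine ⟨c + t, fun n hn => ?_⟩
  have h1 : Q ^ n • (⊤ : Submodule R R) = Q ^ n := by
    rw [Ideal.smul_eq_mul, Ideal.mul_top]
  have h2 := hc n (by omega)
  rw [h1] at h2
  rw [eq_bot_iff, h2]
  calc Q ^ (n - c) • (Q ^ c • (⊤ : Submodule R R) ⊓ locW R)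
      ≤ (maximalIdeal R) ^ t • (locW R : Submodule R R) := by
        apply Submodule.smul_mono
        · calc Q ^ (n - c) ≤ (maximalIdeal R) ^ (n - c) := Ideal.pow_right_mono hQm _
            _ ≤ (maximalIdeal R) ^ t := Ideal.pow_le_pow_right (by omega)
        · exact inf_le_right
    _ ≤ ⊥ := by
        apply Submodule.smul_le.mpr
        intro r hr w hw
        have := ht w hw r hr
        simp only [smul_eq_mul, Submodule.mem_bot]
        rw [mul_comm]
        exact this

end LocalPart

section Casting

lemma cast_nsmul_withBot (n a : ℕ) :
    n • ((a : ℕ) : WithBot ℕ∞) = ((n * a : ℕ) : WithBot ℕ∞) := by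
  induction n with
  | zero => simp
  | succ n ih =>
    rw [succ_nsmul, ih, Nat.succ_mul, Nat.cast_add]

lemma exists_nat_of_le_nat {a : WithBot ℕ∞} (ha : a ≠ ⊥) {c : ℕ}
    (h : a ≤ (c : WithBot ℕ∞)) : ∃ a' : ℕ, a = (a' : WithBot ℕ∞) := by
  obtain ⟨b, rfl⟩ := WithBot.ne_bot_iff_exists.mp ha
  have hb : b ≤ (c : ℕ∞) := by
    rw [show ((c : ℕ) : WithBot ℕ∞) = ((c : ℕ∞) : WithBot ℕ∞) by push_cast; rfl] at h
    exact_mod_cast h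
  obtain ⟨a', rfl, -⟩ := WithTop.le_coe_iff.mp hb
  exact ⟨a', by push_cast; rfl⟩

end Casting

lemma hilbSum_one (g : ℕ → ℤ) (n : ℕ) : hilbSum 1 g n = g 0 * n - g 1 := by
  rw [hilbSum, Finset.sum_range_succ, Finset.sum_range_one]
  simp [Nat.choose_one_right]
  ring

/-- in a one-dimensional Noetherian local ring, for a parameter ideal `Q`
and an `m`-primary ideal `K`, `g_1(Q) = -ℓ(R/K) - ℓ(H⁰_m(K))`. -/
theorem stmt_8 (R : Type) [CommRing R] [IsLocalRing R] [IsNoetherianRing R]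
    (hdim : ringKrullDim R = 1)
    (Q : Ideal R) (hQ : IsParameterIdeal R 1 Q)
    (K : Ideal R) (hKprim : K.radical = maximalIdeal R)
    (lenK : ℕ → ℕ)
    (hlenK : ∀ n, (lenK n : WithBot ℕ∞) = mLen R (R ⧸ (K * Q ^ n)))
    (g : ℕ → ℤ)
    (hg : ∃ N, ∀ n ≥ N, (lenK n : ℤ) = hilbSum 1 g n)
    (lK : ℕ) (hlK : (lK : WithBot ℕ∞) = mLen R (R ⧸ K))
    (lH : ℕ)
    (hlH : (lH : WithBot ℕ∞) =
      mLen R ↥(K ⊓ ⨆ t : ℕ, Submodule.colon (⊥ : Submodule R R) (((maximalIdeal R) ^ t : Ideal R) : Set R))) :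
    g 1 = -(lK : ℤ) - (lH : ℤ) := by
  obtain ⟨⟨xv, hxv⟩, hQrad⟩ := hQ
  set x := xv 0 with hx
  have hQx : Q = Ideal.span {x} := by
    rw [hxv]
    congr 1
    ext y
    simp only [Set.mem_range, Set.mem_singleton_iff]
    exact ⟨fun ⟨i, hi⟩ => by rw [Subsingleton.elim i 0] at hi; exact hi.symm,
      fun h => ⟨0, h.symm⟩⟩
  have hQm : Q ≤ maximalIdeal R := hQrad ▸ Ideal.le_radical
  obtain ⟨k, hk⟩ : ∃ k, (maximalIdeal R) ^ k ≤ Ideal.span {x} := by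
    obtain ⟨k, hk⟩ := Ideal.exists_pow_le_of_le_radical_of_fg
      (le_of_eq hQrad.symm) (IsNoetherian.noetherian (maximalIdeal R))
    exact ⟨k, by rwa [hQx] at hk⟩
  set W : Ideal R := locW R with hW
  have hlH' : (lH : WithBot ℕ∞) = mLen R ↥(K ⊓ W) := hlH
  obtain ⟨c₀, hc₀⟩ := locW_inf_pow_eq_bot Q hQm
  set e : WithBot ℕ∞ := mLen R (R ⧸ (W ⊔ Q)) with he
  set c2 : WithBot ℕ∞ := mLen R (R ⧸ (W ⊔ K)) with hc2
  set wc : WithBot ℕ∞ := mLen R ↥W with hwc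
  set n₁ : ℕ := c₀ + 1 with hn₁
  -- Equation (1)
  have eq1 : ∀ n ≥ n₁, (lenK n : WithBot ℕ∞) = wc + (c2 + n • e) := by
    intro n hn
    have hdisj : (K * Q ^ n) ⊓ W = ⊥ := by
      rw [eq_bot_iff]
      calc (K * Q ^ n) ⊓ W ≤ Q ^ n ⊓ W := inf_le_inf_right W Ideal.mul_le_right
        _ = ⊥ := hc₀ n (by omega)
    have hsupeq : (K * Q ^ n) ⊔ W = W ⊔ Ideal.span {x} ^ n * K := by
      rw [sup_comm]
      congr 1
      rw [hQx, mul_comm]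
    calc ((lenK n : ℕ) : WithBot ℕ∞) = mLen R (R ⧸ (K * Q ^ n)) := hlenK n
      _ = mLen R ↥(Submodule.map (K * Q ^ n).mkQ W) + mLen R (R ⧸ ((K * Q ^ n) ⊔ W)) :=
          mLen_quot_decomp _ _
      _ = wc + (c2 + n • e) := by
          rw [mLen_map_mkQ_of_disjoint _ _ hdisj, hsupeq,
            locW_pow_formula hk K n]
          congr 2
          rw [he, hQx]
  -- Equation (2)
  have t2 : (lH : WithBot ℕ∞) = mLen R ↥(Submodule.comap W.subtype K) := by
    rw [hlH']
    have hKW : Submodule.comap W.subtype (K ⊓ W) = Submodule.comap W.subtype K := by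
      ext ⟨a, ha⟩
      simp only [Submodule.mem_comap, Submodule.coe_subtype, Submodule.mem_inf]
      exact ⟨fun h => h.1, fun h => ⟨h, ha⟩⟩
    rw [← hKW]
    exact (mLen_congr (Submodule.comapSubtypeEquivOfLe (inf_le_right : K ⊓ W ≤ W))).symm
  have eq2 : (lK : WithBot ℕ∞) + (lH : WithBot ℕ∞) = wc + c2 := by
    have t1 : (lK : WithBot ℕ∞) =
        mLen R (↥W ⧸ Submodule.comap W.subtype K) + c2 := by
      rw [hlK, mLen_quot_decomp K W, mLen_map_mkQ, hc2, sup_comm K W]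
    have t3 : wc = mLen R ↥(Submodule.comap W.subtype K) +
        mLen R (↥W ⧸ Submodule.comap W.subtype K) := mLen_add _
    rw [t1, t2, t3]
    abel
  -- extraction of e as a natural number
  have he_ne : e ≠ ⊥ := mLen_ne_bot
  have hwc_ne : wc ≠ ⊥ := mLen_ne_bot
  have hc2_ne : c2 ≠ ⊥ := mLen_ne_bot
  have heq1 := eq1 n₁ le_rfl
  have he_le : e ≤ ((lenK n₁ : ℕ) : WithBot ℕ∞) := by
    rw [heq1]
    calc e ≤ n₁ • e := by
          rw [hn₁, succ_nsmul]
          exact le_add_of_nonneg_left (nsmul_nonneg mLen_nonneg c₀)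
      _ ≤ c2 + n₁ • e := le_add_of_nonneg_left mLen_nonneg
      _ ≤ wc + (c2 + n₁ • e) := le_add_of_nonneg_left mLen_nonneg
  obtain ⟨e', hee⟩ := exists_nat_of_le_nat he_ne he_le
  -- natural number formula
  have eqnat : ∀ n ≥ n₁, lenK n = lK + lH + n * e' := by
    intro n hn
    have : ((lenK n : ℕ) : WithBot ℕ∞) = ((lK + lH + n * e' : ℕ) : WithBot ℕ∞) := by
      rw [eq1 n hn, ← add_assoc, ← eq2, hee, cast_nsmul_withBot]
      push_cast
      ring
    exact_mod_cast this
  -- final arithmetic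
  obtain ⟨N, hN⟩ := hg
  set M : ℕ := max N n₁ with hM
  have h1 : (lenK M : ℤ) = g 0 * M - g 1 := by
    rw [hN M (le_max_left _ _), hilbSum_one]
  have h2 : (lenK (M + 1) : ℤ) = g 0 * (M + 1) - g 1 := by
    rw [hN (M + 1) (le_trans (le_max_left _ _) (Nat.le_succ M)), hilbSum_one]
    push_cast
    ring_nf
  have h3 : (lenK M : ℤ) = lK + lH + M * e' := by
    rw [eqnat M (le_max_right _ _)]
    push_cast
    ring
  have h4 : (lenK (M + 1) : ℤ) = lK + lH + (M + 1) * e' := by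
    rw [eqnat (M + 1) (le_trans (le_max_right _ _) (Nat.le_succ M))]
    push_cast
    ring
  have hg0 : g 0 = e' := by
    have := h2.symm.trans h4
    have := h1.symm.trans h3
    nlinarith [h1, h2, h3, h4]
  rw [h1] at h3
  rw [hg0] at h3
  linarith
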